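/- arXiv:2512.19619 — 2 statements merged into one kernel-verified Lean document; each statement's English description precedes it below -/
import Mathlib

section
/- For every complex number z with 0 < |z| < 1, one has π·cot(πz) = 1/z + Σ_{k=1}^∞ 2z/(z² − k²), where the series converges absolutely. -/
open Complex Real

/-- The complex cotangent. -/
noncomputable def ccot (z : ℂ) : ℂ := Complex.cos z / Complex.sin z

namespace CotAux

open Filter Finset Topology

/-- `‖∏ (1 + f i) - 1‖ ≤ ∏ (1 + ‖f i‖) - 1`. -/
lemma norm_prod_one_add_sub_one_le {ι : Type*} (s : Finset ι) (f : ι → ℂ) :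
    ‖∏ i ∈ s, (1 + f i) - 1‖ ≤ ∏ i ∈ s, (1 + ‖f i‖) - 1 := by
  induction s using Finset.cons_induction with
  | empty => simp
  | cons a s ha ih =>
    rw [Finset.prod_cons, Finset.prod_cons]
    have h1 : (1 + f a) * ∏ i ∈ s, (1 + f i) - 1
        = (1 + f a) * (∏ i ∈ s, (1 + f i) - 1) + f a := by ring
    have hle : ‖(1 : ℂ) + f a‖ ≤ 1 + ‖f a‖ := (norm_add_le _ _).trans (by simp)
    have hnn : (0 : ℝ) ≤ ∏ i ∈ s, (1 + ‖f i‖) - 1 := by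
      have : (1 : ℝ) ≤ ∏ i ∈ s, (1 + ‖f i‖) := by
        have := Finset.prod_le_prod (s := s) (f := fun _ => (1 : ℝ))
          (g := fun i => 1 + ‖f i‖) (fun i _ => zero_le_one)
          (fun i _ => le_add_of_nonneg_right (norm_nonneg _))
        simpa using this
      linarith
    calc ‖(1 + f a) * ∏ i ∈ s, (1 + f i) - 1‖
        ≤ ‖(1 : ℂ) + f a‖ * ‖∏ i ∈ s, (1 + f i) - 1‖ + ‖f a‖ := by
          rw [h1]; exact (norm_add_le _ _).trans (by rw [norm_mul])
      _ ≤ (1 + ‖f a‖) * (∏ i ∈ s, (1 + ‖f i‖) - 1) + ‖f a‖ := by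
          have := mul_le_mul hle ih (norm_nonneg _) (by positivity)
          linarith
      _ = (1 + ‖f a‖) * ∏ i ∈ s, (1 + ‖f i‖) - 1 := by ring

lemma prod_one_add_le_exp {ι : Type*} (s : Finset ι) (u : ι → ℝ) (hu : ∀ i, 0 ≤ u i) :
    ∏ i ∈ s, (1 + u i) ≤ Real.exp (∑ i ∈ s, u i) := by
  rw [Real.exp_sum]
  refine Finset.prod_le_prod (fun i _ => by linarith [hu i]) fun i _ => ?_
  have := Real.add_one_le_exp (u i)
  linarith

/-- The sequence of partial Euler products. -/
noncomputable def F (n : ℕ) (z : ℂ) : ℂ :=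
  ∏ j ∈ Finset.range n, (1 - z ^ 2 / ((j : ℂ) + 1) ^ 2)

noncomputable def u (j : ℕ) : ℝ := 1 / ((j : ℝ) + 1) ^ 2

lemma u_nonneg (j : ℕ) : 0 ≤ u j := by unfold u; positivity

lemma u_summable : Summable u := by
  have := (summable_nat_add_iff (f := fun n : ℕ => 1 / (n : ℝ) ^ 2) 1).mpr
    (Real.summable_one_div_nat_pow.mpr one_lt_two)
  refine this.congr fun j => ?_
  unfold u
  push_cast
  ring_nf

lemma norm_coe_succ (j : ℕ) : ‖((j : ℂ) + 1)‖ = (j : ℝ) + 1 := by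
  have h : ((j : ℂ) + 1) = ((j + 1 : ℕ) : ℂ) := by push_cast; ring
  rw [h, Complex.norm_natCast]
  push_cast; ring

lemma norm_term_le {z : ℂ} (hz : ‖z‖ ≤ 1) (j : ℕ) : ‖z ^ 2 / ((j : ℂ) + 1) ^ 2‖ ≤ u j := by
  rw [norm_div, norm_pow, norm_pow, norm_coe_succ]
  unfold u
  rw [div_le_div_iff₀ (by positivity) (by positivity)]
  have : ‖z‖ ^ 2 ≤ 1 := by nlinarith [norm_nonneg z]
  nlinarith

lemma F_cauchy : UniformCauchySeqOn F atTop (Metric.ball (0 : ℂ) 1) := by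
  rw [Metric.uniformCauchySeqOn_iff]
  intro ε hε
  set S : ℝ := ∑' j, u j with hS
  set C : ℝ := Real.exp S with hC
  have hCpos : 0 < C := Real.exp_pos _
  have htail : Tendsto (fun n : ℕ => C * (Real.exp (∑' k, u (k + n)) - 1)) atTop (𝓝 0) := by
    have h0 : Tendsto (fun n : ℕ => ∑' k, u (k + n)) atTop (𝓝 0) := tendsto_sum_nat_add u
    have := ((Real.continuous_exp.tendsto 0).comp h0)
    simpa using (this.sub_const 1).const_mul C
  have hev : ∀ᶠ n : ℕ in atTop, C * (Real.exp (∑' k, u (k + n)) - 1) < ε := by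
    have := htail.eventually (eventually_lt_nhds hε) -- maybe wrong name
    simpa using this
  obtain ⟨N, hN⟩ := hev.exists
  refine ⟨N, ?_⟩
  -- key estimate for n ≤ m, both ≥ N
  have key : ∀ m n, N ≤ n → n ≤ m → ∀ z ∈ Metric.ball (0 : ℂ) 1,
      dist (F m z) (F n z) < ε := by
    intro m n hNn hnm z hzball
    have hz : ‖z‖ ≤ 1 := by
      have := Metric.mem_ball.mp hzball
      simpa [dist_eq_norm] using this.le
    rw [dist_eq_norm]
    have hsplit : F m z = F n z * ∏ j ∈ Finset.Ico n m, (1 - z ^ 2 / ((j : ℂ) + 1) ^ 2) :=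
      (Finset.prod_range_mul_prod_Ico _ hnm).symm
    have h1 : ‖F n z‖ ≤ C := by
      have hb : ‖F n z‖ ≤ ∏ j ∈ Finset.range n, (1 + u j) := by
        rw [F, norm_prod]
        refine Finset.prod_le_prod (fun i _ => norm_nonneg _) fun i _ => ?_
        calc ‖1 - z ^ 2 / ((i : ℂ) + 1) ^ 2‖ ≤ ‖(1 : ℂ)‖ + ‖z ^ 2 / ((i : ℂ) + 1) ^ 2‖ :=
              norm_sub_le _ _
          _ ≤ 1 + u i := by simpa using add_le_add_left (norm_term_le hz i) 1
      refine hb.trans ((prod_one_add_le_exp _ _ u_nonneg).trans ?_)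
      exact Real.exp_le_exp.mpr (Summable.sum_le_tsum _ (fun i _ => u_nonneg i) u_summable)
    have h2 : ‖∏ j ∈ Finset.Ico n m, (1 - z ^ 2 / ((j : ℂ) + 1) ^ 2) - 1‖
        ≤ Real.exp (∑' k, u (k + N)) - 1 := by
      have ha := norm_prod_one_add_sub_one_le (Finset.Ico n m)
        (fun j => -(z ^ 2 / ((j : ℂ) + 1) ^ 2))
      simp only [← sub_eq_add_neg, norm_neg] at ha
      refine ha.trans ?_
      have hb : ∏ j ∈ Finset.Ico n m, (1 + ‖z ^ 2 / ((j : ℂ) + 1) ^ 2‖)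
          ≤ ∏ j ∈ Finset.Ico n m, (1 + u j) :=
        Finset.prod_le_prod (fun i _ => by positivity)
          (fun i _ => add_le_add_right (norm_term_le hz i) 1)
      have hc : ∑ j ∈ Finset.Ico n m, u j ≤ ∑' k, u (k + N) := by
        have hsummable : Summable fun k : ℕ => u (k + N) :=
          (summable_nat_add_iff N).mpr u_summable
        have hsummable' : Summable fun k : ℕ => u (N + k) :=
          hsummable.congr fun k => by rw [Nat.add_comm]
        calc ∑ j ∈ Finset.Ico n m, u j ≤ ∑ j ∈ Finset.Ico N m, u j :=
              Finset.sum_le_sum_of_subset_of_nonneg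
                (Finset.Ico_subset_Ico hNn le_rfl) (fun i _ _ => u_nonneg i)
          _ = ∑ k ∈ Finset.range (m - N), u (N + k) := Finset.sum_Ico_eq_sum_range u N m
          _ ≤ ∑' k, u (N + k) := Summable.sum_le_tsum _ (fun i _ => u_nonneg _) hsummable'
          _ = ∑' k, u (k + N) := tsum_congr fun k => by rw [Nat.add_comm]
      have hd := (prod_one_add_le_exp (Finset.Ico n m) u u_nonneg).trans
        (Real.exp_le_exp.mpr hc)
      linarith [hb.trans hd]
    have hfac : F m z - F n z
        = F n z * (∏ j ∈ Finset.Ico n m, (1 - z ^ 2 / ((j : ℂ) + 1) ^ 2) - 1) := by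
      rw [hsplit]; ring
    calc ‖F m z - F n z‖ = ‖F n z‖ * ‖∏ j ∈ Finset.Ico n m, (1 - z ^ 2 / ((j : ℂ) + 1) ^ 2) - 1‖ := by
          rw [hfac, norm_mul]
      _ ≤ C * (Real.exp (∑' k, u (k + N)) - 1) := by
          refine mul_le_mul h1 h2 (norm_nonneg _) hCpos.le
      _ < ε := hN
  intro m hm n hn z hz
  rcases le_total n m with h | h
  · exact key m n hn h z hz
  · rw [dist_comm]; exact key n m hm h z hz

/-- The limit function. -/
noncomputable def G (t : ℂ) : ℂ := Complex.sin ((π : ℂ) * t) / ((π : ℂ) * t)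

lemma F_tendsto {z : ℂ} (hz : z ≠ 0) : Tendsto (fun n => F n z) atTop (𝓝 (G z)) := by
  have hπz : ((π : ℂ)) * z ≠ 0 :=
    mul_ne_zero (by exact_mod_cast Real.pi_ne_zero) hz
  have h := (Complex.tendsto_euler_sin_prod z).div_const (((π : ℂ)) * z)
  have hG : G z = Complex.sin ((π : ℂ) * z) / ((π : ℂ) * z) := rfl
  rw [hG]
  refine Tendsto.congr (fun n => ?_) h
  rw [F, mul_comm ((π : ℂ) * z), mul_div_assoc, div_self hπz, mul_one]

def sball : Set ℂ := Metric.ball (0 : ℂ) 1 ∩ {(0 : ℂ)}ᶜ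

lemma sball_open : IsOpen sball := Metric.isOpen_ball.inter isOpen_compl_singleton

lemma F_tlu : TendstoLocallyUniformlyOn F G atTop sball :=
  ((F_cauchy.mono Set.inter_subset_left).tendstoUniformlyOn_of_tendsto
    (fun _ hx => F_tendsto hx.2)).tendstoLocallyUniformlyOn

lemma term_lt {z : ℂ} (hz1 : ‖z‖ < 1) (j : ℕ) : ‖z ^ 2 / ((j : ℂ) + 1) ^ 2‖ < 1 := by
  rw [norm_div, norm_pow, norm_pow, norm_coe_succ]
  have h1 : (1 : ℝ) ≤ ((j : ℝ) + 1) ^ 2 := by nlinarith [Nat.cast_nonneg (α := ℝ) j]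
  have h2 : ‖z‖ ^ 2 < 1 := by nlinarith [norm_nonneg z]
  calc ‖z‖ ^ 2 / ((j : ℝ) + 1) ^ 2 ≤ ‖z‖ ^ 2 := div_le_self (by positivity) h1
    _ < 1 := h2

lemma factor_ne {z : ℂ} (hz1 : ‖z‖ < 1) (j : ℕ) :
    (1 : ℂ) - z ^ 2 / ((j : ℂ) + 1) ^ 2 ≠ 0 := by
  intro hcon
  rw [sub_eq_zero] at hcon
  have h := term_lt hz1 j
  rw [← hcon] at h
  simp at h

lemma coe_succ_ne (j : ℕ) : ((j : ℂ) + 1) ≠ 0 := by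
  intro h
  have h2 := congrArg norm h
  rw [norm_coe_succ] at h2
  simp at h2
  nlinarith [Nat.cast_nonneg (α := ℝ) j]

lemma denom_ne {z : ℂ} (hz1 : ‖z‖ < 1) (j : ℕ) : z ^ 2 - ((j : ℂ) + 1) ^ 2 ≠ 0 := by
  have hc : ((j : ℂ) + 1) ^ 2 ≠ 0 := pow_ne_zero _ (coe_succ_ne j)
  intro hcon
  rw [sub_eq_zero] at hcon
  apply factor_ne hz1 j
  rw [hcon, div_self hc, sub_self]

lemma logDeriv_F {z : ℂ} (hz1 : ‖z‖ < 1) (n : ℕ) :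
    logDeriv (F n) z = ∑ j ∈ Finset.range n, 2 * z / (z ^ 2 - ((j : ℂ) + 1) ^ 2) := by
  have h := logDeriv_prod (s := Finset.range n)
    (f := fun (j : ℕ) (w : ℂ) => 1 - w ^ 2 / ((j : ℂ) + 1) ^ 2) (x := z)
    (fun j _ => factor_ne hz1 j)
    (fun j _ => ((differentiable_const (1 : ℂ)).sub
      ((differentiable_pow 2).div_const _)).differentiableAt)
  calc logDeriv (F n) z
      = ∑ j ∈ Finset.range n, logDeriv (fun w : ℂ => 1 - w ^ 2 / ((j : ℂ) + 1) ^ 2) z := h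
    _ = ∑ j ∈ Finset.range n, 2 * z / (z ^ 2 - ((j : ℂ) + 1) ^ 2) := by
        refine Finset.sum_congr rfl fun j _ => ?_
        have hc : ((j : ℂ) + 1) ^ 2 ≠ 0 := pow_ne_zero _ (coe_succ_ne j)
        have hd : HasDerivAt (fun w : ℂ => 1 - w ^ 2 / ((j : ℂ) + 1) ^ 2)
            (-(2 * z / ((j : ℂ) + 1) ^ 2)) z := by
          have h2 := ((hasDerivAt_pow 2 z).div_const (((j : ℂ) + 1) ^ 2)).const_sub 1
          refine h2.congr_deriv ?_
          norm_num
        rw [logDeriv_apply, hd.deriv]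
        have h1 : (1 : ℂ) - z ^ 2 / ((j : ℂ) + 1) ^ 2 ≠ 0 := factor_ne hz1 j
        have h2 : z ^ 2 - ((j : ℂ) + 1) ^ 2 ≠ 0 := denom_ne hz1 j
        rw [div_eq_div_iff h1 h2]
        field_simp
        ring

lemma sin_ne {z : ℂ} (hz0 : z ≠ 0) (hz1 : ‖z‖ < 1) : Complex.sin ((π : ℂ) * z) ≠ 0 := by
  intro h
  rw [Complex.sin_eq_zero_iff] at h
  obtain ⟨k, hk⟩ := h
  have hπ : ((π : ℂ)) ≠ 0 := by exact_mod_cast Real.pi_ne_zero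
  have hzk : z = (k : ℂ) := mul_left_cancel₀ hπ (hk.trans (mul_comm _ _))
  have hk0 : k ≠ 0 := by
    rintro rfl
    exact hz0 (by simpa using hzk)
  have h1 : (1 : ℝ) ≤ ‖z‖ := by
    rw [hzk]
    rw [Complex.norm_intCast]
    exact_mod_cast Int.one_le_abs (by simpa using hk0)
  linarith

lemma logDeriv_G {z : ℂ} (hz0 : z ≠ 0) (hz1 : ‖z‖ < 1) :
    logDeriv G z = (π : ℂ) * Complex.cot ((π : ℂ) * z) - 1 / z := by
  have hπ : ((π : ℂ)) ≠ 0 := by exact_mod_cast Real.pi_ne_zero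
  have hπz : ((π : ℂ)) * z ≠ 0 := mul_ne_zero hπ hz0
  have hsin : Complex.sin ((π : ℂ) * z) ≠ 0 := sin_ne hz0 hz1
  have hd1 : DifferentiableAt ℂ (fun t : ℂ => Complex.sin ((π : ℂ) * t)) z :=
    (Complex.differentiable_sin.comp ((differentiable_id.const_mul _))).differentiableAt
  have hd2 : DifferentiableAt ℂ (fun t : ℂ => (π : ℂ) * t) z :=
    (differentiable_id.const_mul _).differentiableAt
  have hG : G = fun t : ℂ => Complex.sin ((π : ℂ) * t) / ((π : ℂ) * t) := rfl
  rw [hG, logDeriv_div z hsin hπz hd1 hd2]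
  have e1 : logDeriv (fun t : ℂ => Complex.sin ((π : ℂ) * t)) z
      = Complex.cot ((π : ℂ) * z) * (π : ℂ) := by
    have hcomp : (fun t : ℂ => Complex.sin ((π : ℂ) * t))
        = Complex.sin ∘ (fun t : ℂ => (π : ℂ) * t) := rfl
    rw [hcomp, logDeriv_comp (Complex.differentiable_sin _) hd2, Complex.logDeriv_sin]
    congr 1
    simpa using (((hasDerivAt_id z).const_mul ((π : ℂ)))).deriv
  have e2 : logDeriv (fun t : ℂ => (π : ℂ) * t) z = 1 / z := by
    rw [logDeriv_const_mul z _ hπ]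
    simp
  rw [e1, e2]
  ring

lemma abs_summable {z : ℂ} (hz1 : ‖z‖ < 1) :
    Summable (fun k : ℕ => ‖2 * z / (z ^ 2 - ((k : ℂ) + 1) ^ 2)‖) := by
  set d : ℝ := 1 - ‖z‖ ^ 2 with hd
  have hdpos : 0 < d := by nlinarith [norm_nonneg z]
  have hmaj : Summable (fun k : ℕ => (2 / d) * u k) := u_summable.mul_left _
  refine Summable.of_nonneg_of_le (fun k => norm_nonneg _) (fun k => ?_) hmaj
  have hlow : ((k : ℝ) + 1) ^ 2 * d ≤ ‖z ^ 2 - ((k : ℂ) + 1) ^ 2‖ := by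
    have h1 : ‖((k : ℂ) + 1) ^ 2‖ - ‖z ^ 2‖ ≤ ‖z ^ 2 - ((k : ℂ) + 1) ^ 2‖ := by
      rw [norm_sub_rev]
      exact norm_sub_norm_le _ _
    rw [norm_pow, norm_pow, norm_coe_succ] at h1
    have h2 : (1 : ℝ) ≤ ((k : ℝ) + 1) ^ 2 := by nlinarith [Nat.cast_nonneg (α := ℝ) k]
    nlinarith [norm_nonneg z]
  have hlowpos : (0 : ℝ) < ((k : ℝ) + 1) ^ 2 * d := by positivity
  rw [norm_div]
  have hnum : ‖(2 : ℂ) * z‖ ≤ 2 := by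
    rw [norm_mul]
    have : ‖(2 : ℂ)‖ = 2 := by norm_num
    nlinarith [norm_nonneg z]
  calc ‖(2 : ℂ) * z‖ / ‖z ^ 2 - ((k : ℂ) + 1) ^ 2‖
      ≤ 2 / (((k : ℝ) + 1) ^ 2 * d) := by
        apply div_le_div₀ (by norm_num) hnum hlowpos hlow
    _ = (2 / d) * u k := by
        rw [u]
        field_simp

end CotAux

open CotAux Filter Topology

/-- Mittag-Leffler / partial fraction expansion of the cotangent on the punctured
unit disk: `π cot (π z) = 1/z + ∑_{k ≥ 1} 2z/(z² − k²)`, with absolute convergence. -/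
theorem cot_partial_fraction_expansion (z : ℂ) (hz0 : 0 < ‖z‖)
    (hz1 : ‖z‖ < 1) :
    Summable (fun k : ℕ => ‖2 * z / (z ^ 2 - ((k : ℂ) + 1) ^ 2)‖) ∧
    (π : ℂ) * ccot ((π : ℂ) * z) =
      1 / z + ∑' k : ℕ, 2 * z / (z ^ 2 - ((k : ℂ) + 1) ^ 2) := by
  have hz : z ≠ 0 := by
    intro h
    rw [h] at hz0
    simp at hz0
  have hznorm : ‖z‖ < 1 := hz1
  have habs' := CotAux.abs_summable hznorm
  have habs : Summable (fun k : ℕ => ‖2 * z / (z ^ 2 - ((k : ℂ) + 1) ^ 2)‖) := by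
    simpa using habs'
  refine ⟨habs, ?_⟩
  have hsumC : Summable (fun k : ℕ => 2 * z / (z ^ 2 - ((k : ℂ) + 1) ^ 2)) :=
    habs'.of_norm
  have hmem : z ∈ CotAux.sball :=
    ⟨Metric.mem_ball.mpr (by simpa [dist_eq_norm] using hznorm), by simpa using hz⟩
  have hgz : CotAux.G z ≠ 0 :=
    div_ne_zero (CotAux.sin_ne hz hznorm)
      (mul_ne_zero (by exact_mod_cast Real.pi_ne_zero) hz)
  have hdiff : ∀ n : ℕ, DifferentiableOn ℂ (CotAux.F n) CotAux.sball := by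
    intro n
    apply Differentiable.differentiableOn
    unfold CotAux.F
    apply Differentiable.fun_finsetProd
    intro j _
    exact (differentiable_const (1 : ℂ)).sub ((differentiable_pow 2).div_const _)
  have htend := Complex.logDeriv_tendsto CotAux.sball_open hmem
    CotAux.F_tlu (Filter.Eventually.of_forall hdiff) hgz
  rw [CotAux.logDeriv_G hz hznorm] at htend
  have htend2 : Tendsto (fun n => ∑ j ∈ Finset.range n, 2 * z / (z ^ 2 - ((j : ℂ) + 1) ^ 2))
      atTop (𝓝 ((π : ℂ) * Complex.cot ((π : ℂ) * z) - 1 / z)) :=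
    htend.congr fun n => CotAux.logDeriv_F hznorm n
  have h3 := hsumC.hasSum.tendsto_sum_nat
  have hkey := tendsto_nhds_unique htend2 h3
  have hccot : ccot ((π : ℂ) * z) = Complex.cot ((π : ℂ) * z) := rfl
  rw [hccot, ← hkey]
  ring
end

section
/- Fix T > 0 and ρ with 0 < |ρ| < T/2. For the operator (𝒞^ρ φ)(τ) = (1/(2Ti)) ∫_𝕋 (φ(σ) − φ(τ))·cot((π/T)ρ(σ − τ))·ρ dσ acting on functions on the unit circle, one has 𝒞^ρ[τ^m] = 0 for all integers m ≥ 0. -/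
open Complex Real

/-- The Cauchy-type layer potential operator `𝒞^ρ` with cotangent kernel:
`(𝒞^ρ φ)(τ) = (1/(2Ti)) ∮_{|σ|=1} (φ(σ) − φ(τ)) cot((π/T)ρ(σ − τ)) ρ dσ`. -/
noncomputable def cauchyCrho (T ρ : ℝ) (φ : ℂ → ℂ) (τ : ℂ) : ℂ :=
  (1 / (2 * (T : ℂ) * Complex.I)) *
    ∮ σ in C(0, 1), (φ σ - φ τ) * ccot (((π : ℂ) / T) * ρ * (σ - τ)) * ρ

open Filter Set Metric Topology in
/-- `𝒞^ρ` annihilates the monomials `τ^m` for `m ≥ 0`. -/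
theorem cauchyCrho_of_nonneg_monomial (T ρ : ℝ) (hT : 0 < T) (hρ0 : 0 < |ρ|)
    (hρT : |ρ| < T / 2) (m : ℕ) (τ : ℂ) (hτ : ‖τ‖ = 1) :
    cauchyCrho T ρ (fun σ => σ ^ m) τ = 0 := by
  have hρ' : ρ ≠ 0 := fun h => by simp [h] at hρ0
  have hρC : (ρ : ℂ) ≠ 0 := Complex.ofReal_ne_zero.2 hρ'
  have hTC : (T : ℂ) ≠ 0 := Complex.ofReal_ne_zero.2 hT.ne'
  have hπC : (π : ℂ) ≠ 0 := Complex.ofReal_ne_zero.2 Real.pi_ne_zero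
  set c : ℂ := (π : ℂ) / T * ρ with hc
  have hcne : c ≠ 0 := by
    simp only [hc]
    exact mul_ne_zero (div_ne_zero hπC hTC) hρC
  set f : ℂ → ℂ := fun σ => (σ ^ m - τ ^ m) * ccot (c * (σ - τ)) * ρ with hf
  -- radius
  set r : ℝ := T / (2 * |ρ|) with hr
  have h1r : 1 < r := by
    rw [hr, lt_div_iff₀ (by positivity)]
    linarith
  have hrT : r + 1 < T / |ρ| := by
    have : T / |ρ| = 2 * r := by
      field_simp [hr]
      rw [hr]; field_simp
    rw [this]; linarith
  -- sin is nonzero off the diagonal in the relevant region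
  have hsin : ∀ z : ℂ, ‖z - τ‖ < T / |ρ| → z ≠ τ →
      Complex.sin (c * (z - τ)) ≠ 0 := by
    intro z hz hne hzero
    rcases Complex.sin_eq_zero_iff.1 hzero with ⟨k, hk⟩
    have hzτ : z - τ = k * T / ρ := by
      have h2 : c * (z - τ) = c * (↑k * ↑T / ↑ρ) := by
        rw [hk, hc]; field_simp
      exact mul_left_cancel₀ hcne h2
    have hk0 : k ≠ 0 := by
      rintro rfl
      simp at hzτ
      exact hne (sub_eq_zero.1 (by simpa [div_eq_zero_iff, hρC, hTC] using hzτ))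
    have habs : ‖z - τ‖ = |(k : ℝ)| * T / |ρ| := by
      rw [hzτ]
      have : ((k : ℂ) * T / ρ) = (((k : ℝ) * T / ρ : ℝ) : ℂ) := by push_cast; ring
      rw [this, Complex.norm_real, Real.norm_eq_abs, abs_div, abs_mul, abs_of_pos hT]
    have hk1 : (1 : ℝ) ≤ |(k : ℝ)| := by
      have : (1 : ℤ) ≤ |k| := Int.one_le_abs hk0
      calc (1:ℝ) ≤ (|k| : ℤ) := by exact_mod_cast this
        _ = |(k : ℝ)| := by push_cast; ring
    have : T / |ρ| ≤ ‖z - τ‖ := by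
      rw [habs, div_le_div_iff₀ hρ0 hρ0]
      have h2 : T * |ρ| ≤ |(k:ℝ)| * (T * |ρ|) := le_mul_of_one_le_left (by positivity) hk1
      nlinarith
    linarith
  -- f is differentiable off τ in the ball of radius r
  have hfd : ∀ z ∈ ball (0 : ℂ) r, z ≠ τ → DifferentiableAt ℂ f z := by
    intro z hz hne
    have hzr : ‖z - τ‖ < T / |ρ| := by
      have hz' : ‖z‖ < r := by simpa [Complex.dist_eq] using hz
      calc ‖z - τ‖ ≤ ‖z‖ + ‖τ‖ := by
            simpa [sub_eq_add_neg] using norm_add_le z (-τ)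
        _ < r + 1 := by rw [hτ]; linarith
        _ < T / |ρ| := hrT
    have hs := hsin z hzr hne
    simp only [hf, ccot]
    apply DifferentiableAt.mul _ (differentiableAt_const _)
    apply DifferentiableAt.mul
    · exact (differentiableAt_pow m).sub (differentiableAt_const _)
    · apply DifferentiableAt.div
      · exact (Complex.differentiable_cos _).comp z
          ((differentiableAt_const _).mul ((differentiableAt_id).sub (differentiableAt_const _)))
      · exact (Complex.differentiable_sin _).comp z
          ((differentiableAt_const _).mul ((differentiableAt_id).sub (differentiableAt_const _)))
      · exact hs
  -- f tends to a finite limit at τ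
  obtain ⟨L, hL⟩ : ∃ L : ℂ, Tendsto f (𝓝[≠] τ) (𝓝 L) := by
    refine ⟨(ρ : ℂ) * 1 * ((m : ℂ) * τ ^ (m - 1)) * (c⁻¹ * 1⁻¹), ?_⟩
    have hmem : ∀ᶠ z in 𝓝[≠] τ, ‖z - τ‖ < T / |ρ| ∧ z ≠ τ := by
      filter_upwards [self_mem_nhdsWithin,
        eventually_nhdsWithin_of_eventually_nhds
          (Metric.eventually_nhds_iff.2 ⟨T / |ρ|, by positivity,
            fun {y} hy => by simpa [Complex.dist_eq] using hy⟩)] with z hz1 hz2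
      exact ⟨hz2, hz1⟩
    have hEq : ∀ᶠ z in 𝓝[≠] τ, (ρ : ℂ) * Complex.cos (c * (z - τ)) * slope (fun w => w ^ m) τ z
        * (c⁻¹ * (slope Complex.sin 0 (c * (z - τ)))⁻¹) = f z := by
      filter_upwards [hmem] with z hz
      obtain ⟨hz1, hz2⟩ := hz
      have hzτ : z - τ ≠ 0 := sub_ne_zero.2 hz2
      have hs := hsin z hz1 hz2
      have hw : c * (z - τ) ≠ 0 := mul_ne_zero hcne hzτ
      simp only [slope_def_field, hf, ccot, Complex.sin_zero, sub_zero]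
      field_simp
    apply Tendsto.congr' hEq
    have h1 : Tendsto (fun z : ℂ => c * (z - τ)) (𝓝[≠] τ) (𝓝[≠] 0) := by
      apply tendsto_nhdsWithin_of_tendsto_nhds_of_eventually_within
      · have : Tendsto (fun z : ℂ => c * (z - τ)) (𝓝 τ) (𝓝 (c * (τ - τ))) :=
          (tendsto_id.sub_const τ).const_mul c
        simp only [sub_self, mul_zero] at this
        exact this.mono_left nhdsWithin_le_nhds
      · filter_upwards [self_mem_nhdsWithin] with z hz
        exact mul_ne_zero hcne (sub_ne_zero.2 hz)
    have hcos : Tendsto (fun z : ℂ => Complex.cos (c * (z - τ))) (𝓝[≠] τ) (𝓝 1) := by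
      have : Tendsto (fun z : ℂ => Complex.cos (c * (z - τ))) (𝓝 τ) (𝓝 (Complex.cos (c * (τ - τ)))) :=
        (Complex.continuous_cos.comp (continuous_const.mul (continuous_id.sub continuous_const))).tendsto τ
      simp only [sub_self, mul_zero, Complex.cos_zero] at this
      exact this.mono_left nhdsWithin_le_nhds
    have hpow : Tendsto (slope (fun w : ℂ => w ^ m) τ) (𝓝[≠] τ) (𝓝 ((m : ℂ) * τ ^ (m - 1))) :=
      hasDerivAt_iff_tendsto_slope.1 (hasDerivAt_pow m τ)
    have hslopesin : Tendsto (fun z : ℂ => slope Complex.sin 0 (c * (z - τ))) (𝓝[≠] τ) (𝓝 1) := by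
      have h2 : Tendsto (slope Complex.sin 0) (𝓝[≠] (0:ℂ)) (𝓝 1) := by
        have := hasDerivAt_iff_tendsto_slope.1 (Complex.hasDerivAt_sin 0)
        simpa using this
      exact h2.comp h1
    exact ((tendsto_const_nhds.mul hcos).mul hpow).mul
      (tendsto_const_nhds.mul (hslopesin.inv₀ one_ne_zero))
  -- the updated function
  set g : ℂ → ℂ := Function.update f τ (limUnder (𝓝[≠] τ) f) with hg
  have hτr : τ ∈ ball (0 : ℂ) r := by simpa [Complex.dist_eq, hτ] using h1r
  -- g is differentiable on the ball of radius r
  have hgd : ∀ z ∈ ball (0 : ℂ) r, DifferentiableAt ℂ g z := by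
    have hbdd : ∀ᶠ z in 𝓝[≠] τ, ‖f z‖ < ‖L‖ + 1 :=
      (hL.norm).eventually_lt_const (by linarith [norm_nonneg L])
    rw [eventually_nhdsWithin_iff] at hbdd
    obtain ⟨t, ht, htopen, hτt⟩ := _root_.eventually_nhds_iff.1 hbdd
    set s : Set ℂ := t ∩ ball (0 : ℂ) r with hsdef
    have hsopen : IsOpen s := htopen.inter isOpen_ball
    have hτs : τ ∈ s := ⟨hτt, hτr⟩
    have hds : DifferentiableOn ℂ g s := by
      apply Complex.differentiableOn_update_limUnder_of_bddAbove (hsopen.mem_nhds hτs)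
      · intro z hz
        exact (hfd z hz.1.2 hz.2).differentiableWithinAt
      · refine ⟨‖L‖ + 1, ?_⟩
        rintro - ⟨z, hz, rfl⟩
        exact (ht z hz.1.1 hz.2).le
    intro z hz
    by_cases hzτ : z = τ
    · subst hzτ
      exact (hds.differentiableAt (hsopen.mem_nhds hτs))
    · have heq : g =ᶠ[𝓝 z] f := by
        filter_upwards [isOpen_compl_singleton.mem_nhds hzτ] with w hw
        exact Function.update_of_ne hw _ _
      exact (hfd z hz hzτ).congr_of_eventuallyEq heq
  have hgball : DifferentiableOn ℂ g (ball (0 : ℂ) r) := fun z hz =>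
    (hgd z hz).differentiableWithinAt
  have hsub : closedBall (0 : ℂ) 1 ⊆ ball (0 : ℂ) r := closedBall_subset_ball h1r
  -- circle integral of g vanishes
  have hgint : (∮ z in C(0, 1), g z) = 0 := by
    apply circleIntegral_eq_zero_of_differentiable_on_off_countable (zero_le_one)
      Set.countable_empty (hgball.continuousOn.mono hsub)
    intro z hz
    exact hgd z (ball_subset_ball h1r.le hz.1)
  -- the circle integrals of f and g agree (they differ only at τ)
  have hfg : (∮ z in C(0, 1), f z) = ∮ z in C(0, 1), g z := by
    unfold circleIntegral
    apply intervalIntegral.integral_congr_ae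
    have hcount : ({θ : ℝ | circleMap 0 1 θ = τ}).Countable := by
      have h1 : ({θ : ℝ | circleMap 0 1 θ = τ}) =
          (fun θ : ℝ => (θ : ℂ) * Complex.I) ⁻¹' (Complex.exp ⁻¹' {τ}) := by
        ext θ; simp [circleMap]
      rw [h1]
      apply Set.Countable.preimage
      · exact Complex.countable_preimage_exp.2 (Set.countable_singleton τ)
      · intro a b hab
        simp only [mul_left_inj' Complex.I_ne_zero, Complex.ofReal_inj] at hab
        exact hab
    filter_upwards [MeasureTheory.ae_iff.2 (by
      rw [show {θ : ℝ | ¬ circleMap 0 1 θ ≠ τ} = {θ : ℝ | circleMap 0 1 θ = τ} by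
        ext θ; simp]
      exact hcount.measure_zero _)] with θ (hθ : circleMap 0 1 θ ≠ τ) _
    rw [hg, Function.update_of_ne hθ]
  have : (∮ z in C(0, 1), f z) = 0 := hfg.trans hgint
  unfold cauchyCrho
  rw [show (∮ σ in C(0, 1), ((fun σ : ℂ => σ ^ m) σ - (fun σ : ℂ => σ ^ m) τ) *
      ccot (((π : ℂ) / T) * ρ * (σ - τ)) * ρ) = ∮ z in C(0, 1), f z from rfl, this, mul_zero]
end
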